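/- For every x ≥ u > 0, ∫₀^{π/2} dt / (x − √(x² − u²)·cos t) = (2/u)·arctan((x + √(x² − u²))/u), and in particular this integral is at most π/u. -/

import Mathlib

/-- For `x ≥ u > 0`,
`∫₀^{π/2} dt/(x − √(x² − u²) cos t) = (2/u)·arctan((x + √(x² − u²))/u)`,
and this is at most `π/u`. -/
theorem integral_Psi (x u : ℝ) (hu : 0 < u) (hxu : u ≤ x) :
    (∫ t in (0:ℝ)..(Real.pi / 2),
        1 / (x - Real.sqrt (x ^ 2 - u ^ 2) * Real.cos t))
      = (2 / u) * Real.arctan ((x + Real.sqrt (x ^ 2 - u ^ 2)) / u) ∧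
    (∫ t in (0:ℝ)..(Real.pi / 2),
        1 / (x - Real.sqrt (x ^ 2 - u ^ 2) * Real.cos t))
      ≤ Real.pi / u := by
  set b := Real.sqrt (x ^ 2 - u ^ 2) with hb
  have hx : 0 < x := lt_of_lt_of_le hu hxu
  have hsub : (0:ℝ) ≤ x ^ 2 - u ^ 2 := by nlinarith
  have hb0 : 0 ≤ b := Real.sqrt_nonneg _
  have hbsq : b ^ 2 = x ^ 2 - u ^ 2 := Real.sq_sqrt hsub
  have hbx : b < x := by nlinarith
  have hpos : ∀ t : ℝ, 0 < x - b * Real.cos t := by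
    intro t
    have h1 : b * Real.cos t ≤ b := by
      nlinarith [Real.cos_le_one t, Real.neg_one_le_cos t]
    linarith
  set F : ℝ → ℝ := fun t => (2 / u) * Real.arctan ((x + b) * Real.tan (t / 2) / u)
    with hF
  have hderiv : ∀ t ∈ Set.uIcc (0:ℝ) (Real.pi / 2),
      HasDerivAt F (1 / (x - b * Real.cos t)) t := by
    intro t ht
    rw [Set.uIcc_of_le (by positivity)] at ht
    obtain ⟨ht0, ht1⟩ := ht
    have hc : 0 < Real.cos (t / 2) := by
      apply Real.cos_pos_of_mem_Ioo
      constructor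
      · nlinarith [Real.pi_pos]
      · nlinarith [Real.pi_pos]
    have h1 : HasDerivAt (fun s : ℝ => s / 2) (1 / 2) t := by
      simpa using (hasDerivAt_id t).div_const 2
    have h2 : HasDerivAt Real.tan (1 / Real.cos (t / 2) ^ 2) (t / 2) :=
      Real.hasDerivAt_tan (ne_of_gt hc)
    have h3 : HasDerivAt (fun s : ℝ => Real.tan (s / 2))
        (1 / Real.cos (t / 2) ^ 2 * (1 / 2)) t := by
      have h := h2.comp t h1; exact h
    have h4 : HasDerivAt (fun s : ℝ => (x + b) * Real.tan (s / 2) / u)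
        ((x + b) * (1 / Real.cos (t / 2) ^ 2 * (1 / 2)) / u) t :=
      (h3.const_mul (x + b)).div_const u
    have h5 := (Real.hasDerivAt_arctan ((x + b) * Real.tan (t / 2) / u)).comp t h4
    have h6 := h5.const_mul (2 / u)
    convert h6 using 1
    case e'_4 => rfl
    case e'_5 => rfl
    case e'_8 => rfl
    have hct : Real.cos t = 2 * Real.cos (t / 2) ^ 2 - 1 := by
      have h := Real.cos_sq (t / 2)
      rw [show 2 * (t / 2) = t from by ring] at h
      linarith
    have htan : Real.tan (t / 2) = Real.sin (t / 2) / Real.cos (t / 2) :=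
      Real.tan_eq_sin_div_cos _
    have hsc : Real.sin (t / 2) ^ 2 + Real.cos (t / 2) ^ 2 = 1 :=
      Real.sin_sq_add_cos_sq _
    set c := Real.cos (t / 2)
    set s := Real.sin (t / 2)
    have hd := hpos t
    rw [hct] at hd ⊢
    rw [htan]
    have hu' : u ≠ 0 := ne_of_gt hu
    have hc' : c ≠ 0 := ne_of_gt hc
    have hd' : x - b * (2 * c ^ 2 - 1) ≠ 0 := ne_of_gt hd
    have hden2 : 1 + ((x + b) * (s / c) / u) ^ 2 ≠ 0 := by positivity
    field_simp
    linear_combination (c ^ 2) * hbsq +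
      ((x + b) ^ 2) * hsc
  have hcont : IntervalIntegrable (fun t => 1 / (x - b * Real.cos t))
      MeasureTheory.volume 0 (Real.pi / 2) := by
    apply ContinuousOn.intervalIntegrable
    apply ContinuousOn.div continuousOn_const
    · exact (continuous_const.sub (continuous_const.mul Real.continuous_cos)).continuousOn
    · intro t _; exact ne_of_gt (hpos t)
  have hint : (∫ t in (0:ℝ)..(Real.pi / 2), 1 / (x - b * Real.cos t))
      = F (Real.pi / 2) - F 0 :=
    intervalIntegral.integral_eq_sub_of_hasDerivAt hderiv hcont
  have hF0 : F 0 = 0 := by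
    simp [hF, Real.tan_zero, Real.arctan_zero]
  have hFpi : F (Real.pi / 2) = (2 / u) * Real.arctan ((x + b) / u) := by
    have : Real.pi / 2 / 2 = Real.pi / 4 := by ring
    simp [hF, this, Real.tan_pi_div_four]
  have heq : (∫ t in (0:ℝ)..(Real.pi / 2), 1 / (x - b * Real.cos t))
      = (2 / u) * Real.arctan ((x + b) / u) := by
    rw [hint, hF0, hFpi]; ring
  refine ⟨heq, ?_⟩
  rw [heq]
  have harc : Real.arctan ((x + b) / u) ≤ Real.pi / 2 :=
    le_of_lt (Real.arctan_lt_pi_div_two _)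
  have h2u : 0 < 2 / u := by positivity
  calc (2 / u) * Real.arctan ((x + b) / u) ≤ (2 / u) * (Real.pi / 2) := by
        exact mul_le_mul_of_nonneg_left harc (le_of_lt h2u)
    _ = Real.pi / u := by field_simp
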